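/- Let A be a semilocal commutative ring such that for every maximal ideal m of A the residue field A/m has more than three elements. Then H₁(E₂(A),ℤ) = 0, i.e. the group E₂(A) is perfect. -/

import Mathlib

open Matrix

variable (A : Type*) [CommRing A]

/-- The elementary matrix `E₁₂(a) = [[1,a],[0,1]]` as an element of `GL₂(A)`. -/
def E12 (a : A) : GL (Fin 2) A :=
  ⟨!![1, a; 0, 1], !![1, -a; 0, 1],
    by rw [Matrix.mul_fin_two, Matrix.one_fin_two]; ring_nf,
    by rw [Matrix.mul_fin_two, Matrix.one_fin_two]; ring_nf⟩

/-- The elementary matrix `E₂₁(a) = [[1,0],[a,1]]` as an element of `GL₂(A)`. -/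
def E21 (a : A) : GL (Fin 2) A :=
  ⟨!![1, 0; a, 1], !![1, 0; -a, 1],
    by rw [Matrix.mul_fin_two, Matrix.one_fin_two]; ring_nf,
    by rw [Matrix.mul_fin_two, Matrix.one_fin_two]; ring_nf⟩

/-- `E₂(A)`: the subgroup of `GL₂(A)` generated by the elementary matrices. -/
def EE2 : Subgroup (GL (Fin 2) A) :=
  Subgroup.closure (Set.range (E12 A) ∪ Set.range (E21 A))

variable {A}

lemma E12_mem (a : A) : E12 A a ∈ EE2 A :=
  Subgroup.subset_closure (Or.inl ⟨a, rfl⟩)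

lemma E21_mem (a : A) : E21 A a ∈ EE2 A :=
  Subgroup.subset_closure (Or.inr ⟨a, rfl⟩)

/-- The diagonal matrix `diag(u, u⁻¹)` for a unit `u`. -/
def Dg (u : Aˣ) : GL (Fin 2) A :=
  ⟨!![(u : A), 0; 0, (↑u⁻¹ : A)], !![(↑u⁻¹ : A), 0; 0, (u : A)],
    by rw [Matrix.mul_fin_two, Matrix.one_fin_two]; simp,
    by rw [Matrix.mul_fin_two, Matrix.one_fin_two]; simp⟩

lemma Dg_eq (u : Aˣ) :
    Dg u = E12 A u * E21 A (-(↑u⁻¹ : A)) * E12 A u *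
      (E12 A (-1) * E21 A 1 * E12 A (-1)) := by
  ext : 1
  simp only [Dg, E12, E21, Units.val_mul]
  simp [Matrix.mul_fin_two]

lemma Dg_mem (u : Aˣ) : Dg u ∈ EE2 A := by
  rw [Dg_eq]
  exact Subgroup.mul_mem _ (Subgroup.mul_mem _ (Subgroup.mul_mem _ (E12_mem _) (E21_mem _))
    (E12_mem _)) (Subgroup.mul_mem _ (Subgroup.mul_mem _ (E12_mem _) (E21_mem _)) (E12_mem _))

lemma comm12 (u : Aˣ) (b : A) :
    Dg u * E12 A b * (Dg u)⁻¹ * (E12 A b)⁻¹ = E12 A (((u : A) * u - 1) * b) := by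
  ext : 1
  simp only [Dg, E12, Units.inv_mk, Units.val_mul]
  simp [Matrix.mul_fin_two]
  ring

lemma comm21 (u : Aˣ) (b : A) :
    Dg u * E21 A b * (Dg u)⁻¹ * (E21 A b)⁻¹ = E21 A (((↑u⁻¹ : A) * ↑u⁻¹ - 1) * b) := by
  ext : 1
  simp only [Dg, E12, E21, Units.inv_mk, Units.val_mul]
  simp [Matrix.mul_fin_two]
  ring

/-- In a semilocal ring whose residue fields all have more than `3` elements, there is a
unit `x` such that `x² - 1` is also a unit. -/
lemma exists_good_unit {A : Type*} [CommRing A]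
    (hsemi : {I : Ideal A | I.IsMaximal}.Finite)
    (hres : ∀ I : Ideal A, I.IsMaximal → 3 < Cardinal.mk (A ⧸ I)) :
    ∃ x : A, IsUnit x ∧ IsUnit (x * x - 1) := by
  classical
  haveI : Fintype ↥hsemi.toFinset := FinsetCoe.fintype _
  set ι := ↥hsemi.toFinset with hι
  have hmax : ∀ i : ι, (i.1 : Ideal A).IsMaximal := fun i => hsemi.mem_toFinset.mp i.2
  -- choose good residues
  have hc : ∀ i : ι, ∃ c : A ⧸ (i.1 : Ideal A), c ≠ 0 ∧ c ≠ 1 ∧ c ≠ -1 := by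
    intro i
    by_contra h
    push_neg at h
    have hsub : (Set.univ : Set (A ⧸ (i.1 : Ideal A))) ⊆ {0, 1, -1} := by
      intro c _
      rcases eq_or_ne c 0 with h0 | h0
      · exact Or.inl h0
      rcases eq_or_ne c 1 with h1 | h1
      · exact Or.inr (Or.inl h1)
      exact Or.inr (Or.inr (h c h0 h1))
    have : Cardinal.mk (A ⧸ (i.1 : Ideal A)) ≤ 3 := by
      calc Cardinal.mk (A ⧸ (i.1 : Ideal A))
          = Cardinal.mk (Set.univ : Set (A ⧸ (i.1 : Ideal A))) := Cardinal.mk_univ.symm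
        _ ≤ Cardinal.mk ({0, 1, -1} : Set (A ⧸ (i.1 : Ideal A))) := Cardinal.mk_le_mk_of_subset hsub
        _ ≤ 3 := by
            refine (Cardinal.mk_insert_le).trans ?_
            refine (add_le_add (Cardinal.mk_insert_le) (le_refl 1)).trans ?_
            norm_num
    exact absurd (hres _ (hmax i)) (not_lt.mpr this)
  choose c hc0 hc1 hcm1 using hc
  have hpair : Pairwise (Function.onFun IsCoprime fun i : ι => (i.1 : Ideal A)) := by
    intro i j hij
    exact Ideal.isCoprime_iff_sup_eq.mpr
      ((hmax i).coprime_of_ne (hmax j) (fun h => hij (Subtype.ext h)))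
  obtain ⟨y, hy⟩ := Ideal.quotientInfToPiQuotient_surj hpair c
  obtain ⟨x, rfl⟩ := Ideal.Quotient.mk_surjective y
  have hx : ∀ i : ι, Ideal.Quotient.mk (i.1 : Ideal A) x = c i := fun i => by
    rw [← Ideal.quotientInfToPiQuotient_mk']; exact congrFun hy i
  have key : ∀ z : A, (∀ i : ι, Ideal.Quotient.mk (i.1 : Ideal A) z ≠ 0) → IsUnit z := by
    intro z hz
    by_contra h
    obtain ⟨I, hI, hzI⟩ := exists_max_ideal_of_mem_nonunits (mem_nonunits_iff.mpr h)
    have hiι : I ∈ hsemi.toFinset := hsemi.mem_toFinset.mpr hI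
    exact hz ⟨I, hiι⟩ (Ideal.Quotient.eq_zero_iff_mem.mpr hzI)
  refine ⟨x, key x fun i => by rw [hx i]; exact hc0 i, key _ fun i => ?_⟩
  haveI : (i.1 : Ideal A).IsPrime := (hmax i).isPrime
  rw [map_sub, _root_.map_mul, _root_.map_one, hx i]
  intro h
  have h2 : (c i - 1) * (c i + 1) = 0 := by linear_combination h
  rcases mul_eq_zero.mp h2 with h' | h'
  · exact hc1 i (by linear_combination h')
  · exact hcm1 i (by linear_combination h')

variable (A)

open scoped commutatorElement

/-- If `A` is a semilocal ring all of whose residue fields have more than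
three elements, then `H₁(E₂(A), ℤ) = 0`, i.e. `E₂(A)` is perfect. -/
theorem h1_E2_of_semilocal_residue_gt_three
    (A : Type*) [CommRing A]
    (hsemi : {I : Ideal A | I.IsMaximal}.Finite)
    (hres : ∀ I : Ideal A, I.IsMaximal → 3 < Cardinal.mk (A ⧸ I)) :
    Subsingleton (Abelianization ↥(EE2 A)) := by
  classical
  obtain ⟨x, hx, hx1⟩ := exists_good_unit hsemi hres
  set u : Aˣ := hx.unit with hu
  have hux : (u : A) = x := rfl
  obtain ⟨w, hw⟩ := hx1
  -- the inverse-diagonal commutator factor is also a unit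
  have hx1' : IsUnit ((↑u⁻¹ : A) * ↑u⁻¹ - 1) := by
    have : (↑u⁻¹ : A) * ↑u⁻¹ - 1 = (-((↑u⁻¹ : A) * ↑u⁻¹)) * (x * x - 1) := by
      have h1 : (↑u⁻¹ : A) * ↑u = 1 := u.inv_mul
      rw [hux] at h1
      linear_combination ((↑u⁻¹ : A) * x + 1) * h1
    rw [this]
    exact ((hx.unit⁻¹.isUnit.mul hx.unit⁻¹.isUnit).neg).mul ⟨w, hw⟩
  obtain ⟨w', hw'⟩ := hx1'
  set G := ↥(EE2 A)
  -- every generator lies in the commutator subgroup of `G`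
  have key : ∀ g ∈ (Set.range (E12 A) ∪ Set.range (E21 A)),
      ∀ hg : g ∈ EE2 A, (⟨g, hg⟩ : G) ∈ commutator G := by
    rintro g (⟨a, rfl⟩ | ⟨a, rfl⟩) hg
    · -- E12 a is a commutator
      have h2 : ((u : A) * u - 1) * ((↑w⁻¹ : A) * a) = a := by
        rw [hux, ← hw]
        calc ((w : A)) * ((↑w⁻¹ : A) * a) = ((w : A) * ↑w⁻¹) * a := by ring
          _ = a := by rw [w.mul_inv, one_mul]
      have h3 : E12 A a = Dg u * E12 A ((↑w⁻¹ : A) * a) * (Dg u)⁻¹ *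
          (E12 A ((↑w⁻¹ : A) * a))⁻¹ := by rw [comm12, h2]
      have : (⟨E12 A a, hg⟩ : G) =
          ⁅(⟨Dg u, Dg_mem u⟩ : G), (⟨E12 A ((↑w⁻¹ : A) * a), E12_mem _⟩ : G)⁆ := by
        apply Subtype.ext
        simpa [commutatorElement_def] using h3
      rw [this]
      exact Subgroup.commutator_mem_commutator (Subgroup.mem_top _) (Subgroup.mem_top _)
    · -- E21 a is a commutator
      have h2 : ((↑u⁻¹ : A) * ↑u⁻¹ - 1) * ((↑w'⁻¹ : A) * a) = a := by
        rw [← hw']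
        calc ((w' : A)) * ((↑w'⁻¹ : A) * a) = ((w' : A) * ↑w'⁻¹) * a := by ring
          _ = a := by rw [w'.mul_inv, one_mul]
      have h3 : E21 A a = Dg u * E21 A ((↑w'⁻¹ : A) * a) * (Dg u)⁻¹ *
          (E21 A ((↑w'⁻¹ : A) * a))⁻¹ := by rw [comm21, h2]
      have : (⟨E21 A a, hg⟩ : G) =
          ⁅(⟨Dg u, Dg_mem u⟩ : G), (⟨E21 A ((↑w'⁻¹ : A) * a), E21_mem _⟩ : G)⁆ := by
        apply Subtype.ext
        simpa [commutatorElement_def] using h3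
      rw [this]
      exact Subgroup.commutator_mem_commutator (Subgroup.mem_top _) (Subgroup.mem_top _)
  -- hence the commutator subgroup is everything
  have hcomm : commutator G = ⊤ := by
    have h1 : Subgroup.map (EE2 A).subtype (commutator G) =
        Subgroup.map (EE2 A).subtype (⊤ : Subgroup G) := by
      apply le_antisymm
      · exact Subgroup.map_mono le_top
      · rw [← MonoidHom.range_eq_map, Subgroup.range_subtype]
        intro g hg
        refine Subgroup.closure_le (K := Subgroup.map (EE2 A).subtype (commutator G)) |>.mpr
          ?_ hg
        rintro s hs
        have hsE : s ∈ EE2 A := Subgroup.subset_closure hs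
        exact ⟨⟨s, hsE⟩, key s hs hsE, rfl⟩
    exact Subgroup.map_injective (EE2 A).subtype_injective h1
  -- conclude that the abelianization is trivial
  have hone : ∀ g : G, Abelianization.of g = 1 := by
    intro g
    have : g ∈ commutator G := hcomm ▸ Subgroup.mem_top g
    exact (QuotientGroup.eq_one_iff g).mpr this
  refine ⟨fun a b => ?_⟩
  obtain ⟨g, rfl⟩ := QuotientGroup.mk_surjective a
  obtain ⟨g', rfl⟩ := QuotientGroup.mk_surjective b
  rw [show (QuotientGroup.mk g : Abelianization G) = Abelianization.of g from rfl,
    show (QuotientGroup.mk g' : Abelianization G) = Abelianization.of g' from rfl,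
    hone g, hone g']
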